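/- For every ring element x ∈ R, the statistical distance between S_x^{R,n} and the uniform distribution on R^n × R^n equals the average over uniformly random (v^0,v^1) ∈ R^n × R^n of the statistical distance between the distribution of H_{v^0,v^1}(σ) (for uniform σ ∈ {0,1}^n) and the uniform distribution on R. -/

import Mathlib

open Finset

/-- Statistical distance between two real-valued mass functions on a finite type. -/
noncomputable def SD {α : Type} [Fintype α] (P Q : α → ℝ) : ℝ :=
  (∑ a, |P a - Q a|) / 2

/-- The probability mass function of `S_x^{R,n}`: pick uniform `σ ∈ {0,1}ⁿ`,
uniform `u ∈ Rⁿ` with `∑ u_i = x`, and uniform `(v⁰,v¹)` with `v_i^{σ_i} = u_i`. -/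
noncomputable def Sprob (R : Type) [Fintype R] [AddCommGroup R] [DecidableEq R]
    (n : ℕ) (x : R) (v : (Fin n → R) × (Fin n → R)) : ℝ :=
  (∑ σ : Fin n → Bool,
      if (∑ i, if σ i then v.2 i else v.1 i) = x then (1 : ℝ) else 0) /
    (2 ^ n * (Fintype.card R : ℝ) ^ (2 * n - 1))

lemma shift_sum (R : Type) [Fintype R] [AddCommGroup R] [DecidableEq R]
    (n : ℕ) (hn : 1 ≤ n) (x z : R) (f : ℝ → ℝ) :
    ∑ v : (Fin n → R) × (Fin n → R),
      f (∑ σ : Fin n → Bool, if (∑ i, if σ i then v.2 i else v.1 i) = z then (1:ℝ) else 0)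
    = ∑ v : (Fin n → R) × (Fin n → R),
      f (∑ σ : Fin n → Bool, if (∑ i, if σ i then v.2 i else v.1 i) = x then (1:ℝ) else 0) := by
  classical
  set d := x - z with hd
  set i0 : Fin n := ⟨0, hn⟩ with hi0
  set e : ((Fin n → R) × (Fin n → R)) ≃ ((Fin n → R) × (Fin n → R)) :=
    { toFun := fun v => (fun i => v.1 i + if i = i0 then d else 0,
                         fun i => v.2 i + if i = i0 then d else 0),
      invFun := fun v => (fun i => v.1 i - if i = i0 then d else 0,
                          fun i => v.2 i - if i = i0 then d else 0),
      left_inv := by intro v; refine Prod.ext ?_ ?_ <;> funext i <;> simp,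
      right_inv := by intro v; refine Prod.ext ?_ ?_ <;> funext i <;> simp } with he
  refine Fintype.sum_equiv e _ _ ?_
  intro v
  congr 1
  refine Finset.sum_congr rfl fun σ _ => ?_
  have hsum : (∑ i, if σ i then (e v).2 i else (e v).1 i)
      = (∑ i, if σ i then v.2 i else v.1 i) + d := by
    have : ∀ i, (if σ i then (e v).2 i else (e v).1 i)
        = (if σ i then v.2 i else v.1 i) + (if i = i0 then d else 0) := by
      intro i; by_cases h : σ i <;> simp [he, h]
    rw [Finset.sum_congr rfl fun i _ => this i, Finset.sum_add_distrib]
    simp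
  rw [hsum]
  have hiff : (∑ i, if σ i then v.2 i else v.1 i) = z
      ↔ (∑ i, if σ i then v.2 i else v.1 i) + d = x := by
    constructor
    · intro h; rw [h, hd]; abel
    · intro h; rw [hd] at h; linear_combination (norm := abel_nf) h
  exact if_congr hiff rfl rfl

/-- The statistical distance of `S_x^{R,n}` to uniform equals the average over
`(v⁰,v¹)` of the statistical distance of the distribution of `H_{v⁰,v¹}(σ)`
(for uniform `σ`) to the uniform distribution on `R`. -/
theorem sd_Sx_eq_average_sd_hash
    (R : Type) [Fintype R] [AddCommGroup R] [DecidableEq R]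
    (n : ℕ) (hn : 1 ≤ n) (x : R) :
    SD (Sprob R n x)
        (fun _ : (Fin n → R) × (Fin n → R) =>
          1 / (Fintype.card R : ℝ) ^ (2 * n))
    = (∑ v : (Fin n → R) × (Fin n → R),
        SD (fun z : R =>
              (∑ σ : Fin n → Bool,
                if (∑ i, if σ i then v.2 i else v.1 i) = z then (1 : ℝ) else 0)
                / 2 ^ n)
            (fun _ : R => 1 / (Fintype.card R : ℝ)))
        / (Fintype.card R : ℝ) ^ (2 * n) := by
  classical
  set N : ℝ := (Fintype.card R : ℝ) with hNdef
  have hN : 0 < N := by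
    have := Fintype.card_pos (α := R); positivity
  have hpow : N ^ (2*n) = N ^ (2*n-1) * N := by
    rw [← pow_succ]; congr 1; omega
  set c : ((Fin n → R) × (Fin n → R)) → R → ℝ :=
    fun v z => ∑ σ : Fin n → Bool, if (∑ i, if σ i then v.2 i else v.1 i) = z then (1:ℝ) else 0
    with hc
  have h2 : (0:ℝ) < 2 ^ n := by positivity
  have hNp : (0:ℝ) < N ^ (2*n-1) := by positivity
  have step1 : ∀ v, |Sprob R n x v - 1 / N ^ (2*n)|
      = |c v x / 2 ^ n - 1 / N| / N ^ (2*n-1) := by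
    intro v
    have : Sprob R n x v - 1 / N ^ (2*n) = (c v x / 2 ^ n - 1 / N) / N ^ (2*n-1) := by
      rw [hpow]; unfold Sprob; rw [hc]; field_simp; ring
    rw [this, abs_div, abs_of_pos hNp]
  have step2 :
      (∑ v : (Fin n → R) × (Fin n → R),
        SD (fun z : R =>
              (∑ σ : Fin n → Bool,
                if (∑ i, if σ i then v.2 i else v.1 i) = z then (1 : ℝ) else 0)
                / 2 ^ n)
            (fun _ : R => 1 / N))
      = N * (∑ v : (Fin n → R) × (Fin n → R), |c v x / 2 ^ n - 1 / N|) / 2 := by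
    unfold SD
    rw [← Finset.sum_div]
    congr 1
    rw [Finset.sum_comm]
    have : ∀ z : R, (∑ v : (Fin n → R) × (Fin n → R), |c v z / 2 ^ n - 1 / N|)
        = ∑ v : (Fin n → R) × (Fin n → R), |c v x / 2 ^ n - 1 / N| :=
      fun z => shift_sum R n hn x z (fun t => |t / 2 ^ n - 1 / N|)
    rw [Finset.sum_congr rfl fun z _ => this z, Finset.sum_const, nsmul_eq_mul,
      Finset.card_univ, hNdef]
  rw [step2]
  simp only [SD]
  rw [Finset.sum_congr rfl fun v _ => step1 v, ← Finset.sum_div, hpow]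
  generalize (∑ v : (Fin n → R) × (Fin n → R), |c v x / 2 ^ n - 1 / N|) = S
  field_simp
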